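/- arXiv:2503.04712 — 3 statements merged into one kernel-verified Lean document; each statement's English description precedes it below -/
import Mathlib

section
/- Under the second-order self-bounding assumption, fix w0 ∈ E and set L1(w0) = max{1, ρ0(F(w0)+1), ρ0(F(w0))·ρ0(F(w0)+1), ρ1(F(w0)+1)}. Then for every w ∈ E with F(w) ≤ F(w0) and every u ∈ E with ‖u − w‖ ≤ 1/ρ0(F(w0)+1), one has ‖∇²F(u)‖_op ≤ L1(w0). -/
/-- `θ(x) = ∫₀ˣ 1/ρ1(v) dv`. -/
noncomputable def sbTheta (ρ1 : ℝ → ℝ) (x : ℝ) : ℝ := ∫ v in (0 : ℝ)..x, 1 / ρ1 v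

/-- `ρ0(x) = ρ1(x)·√(2 θ(x))`. -/
noncomputable def sbRho0 (ρ1 : ℝ → ℝ) (x : ℝ) : ℝ := ρ1 x * Real.sqrt (2 * sbTheta ρ1 x)

set_option linter.unusedSectionVars false
set_option maxHeartbeats 1000000

open Set intervalIntegral

section ThetaLemmas

variable {ρ1 : ℝ → ℝ} (hρ1mono : MonotoneOn ρ1 (Set.Ici 0))
  (hρ1cont : ContinuousOn ρ1 (Set.Ici 0))
  (hρ1pos : ∀ x ∈ Set.Ici (0 : ℝ), 0 < ρ1 x)

include hρ1cont hρ1pos in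
lemma sb_intInt {a b : ℝ} (ha : 0 ≤ a) (hab : a ≤ b) :
    IntervalIntegrable (fun v => 1 / ρ1 v) MeasureTheory.volume a b := by
  apply ContinuousOn.intervalIntegrable
  rw [Set.uIcc_of_le hab]
  have hsub : Set.Icc a b ⊆ Set.Ici (0:ℝ) := fun x hx => le_trans ha hx.1
  exact ContinuousOn.div continuousOn_const (hρ1cont.mono hsub)
    (fun v hv => (hρ1pos v (hsub hv)).ne')

include hρ1cont hρ1pos in
lemma sbTheta_nonneg {x : ℝ} (hx : 0 ≤ x) : 0 ≤ sbTheta ρ1 x := by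
  apply intervalIntegral.integral_nonneg hx
  intro v hv
  exact (one_div_pos.mpr (hρ1pos v hv.1)).le

include hρ1cont hρ1pos in
lemma sbTheta_lt {a b : ℝ} (ha : 0 ≤ a) (hab : a < b) : sbTheta ρ1 a < sbTheta ρ1 b := by
  have h1 : IntervalIntegrable (fun v => 1 / ρ1 v) MeasureTheory.volume 0 a :=
    sb_intInt hρ1cont hρ1pos le_rfl ha
  have h2 : IntervalIntegrable (fun v => 1 / ρ1 v) MeasureTheory.volume a b :=
    sb_intInt hρ1cont hρ1pos ha hab.le
  have hadd := intervalIntegral.integral_add_adjacent_intervals h1 h2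
  have hpos : 0 < ∫ v in a..b, 1 / ρ1 v := by
    apply intervalIntegral_pos_of_pos_on h2 _ hab
    intro v hv
    exact one_div_pos.mpr (hρ1pos v (le_trans ha hv.1.le))
  have : sbTheta ρ1 b = sbTheta ρ1 a + ∫ v in a..b, 1 / ρ1 v := by
    rw [sbTheta, sbTheta, ← hadd]
  linarith

include hρ1cont hρ1pos in
lemma sbTheta_pos {x : ℝ} (hx : 0 < x) : 0 < sbTheta ρ1 x := by
  have h0 : sbTheta ρ1 0 = 0 := by simp [sbTheta]
  have := sbTheta_lt hρ1cont hρ1pos le_rfl hx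
  linarith

include hρ1mono hρ1cont hρ1pos in
lemma sbTheta_ge {x : ℝ} (hx : 0 ≤ x) : x / ρ1 x ≤ sbTheta ρ1 x := by
  have h1 : IntervalIntegrable (fun _ : ℝ => 1 / ρ1 x) MeasureTheory.volume 0 x :=
    intervalIntegrable_const
  have h2 : IntervalIntegrable (fun v => 1 / ρ1 v) MeasureTheory.volume 0 x :=
    sb_intInt hρ1cont hρ1pos le_rfl hx
  have hle : ∀ v ∈ Set.Icc (0:ℝ) x, 1 / ρ1 x ≤ 1 / ρ1 v := by
    intro v hv
    exact one_div_le_one_div_of_le (hρ1pos v hv.1) (hρ1mono hv.1 hx hv.2)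
  calc x / ρ1 x = ∫ _ in (0:ℝ)..x, 1 / ρ1 x := by simp [div_eq_mul_inv, mul_comm]
    _ ≤ _ := intervalIntegral.integral_mono_on hx h1 h2 hle

include hρ1pos in
lemma sbRho0_nonneg {x : ℝ} (hx : 0 ≤ x) : 0 ≤ sbRho0 ρ1 x :=
  mul_nonneg (hρ1pos x hx).le (Real.sqrt_nonneg _)

include hρ1cont hρ1pos in
lemma sbRho0_pos {x : ℝ} (hx : 0 < x) : 0 < sbRho0 ρ1 x :=
  mul_pos (hρ1pos x hx.le) (Real.sqrt_pos.mpr (by linarith [sbTheta_pos hρ1cont hρ1pos hx]))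

include hρ1mono hρ1cont hρ1pos in
lemma sbRho0_lt {a b : ℝ} (ha : 0 ≤ a) (hab : a < b) : sbRho0 ρ1 a < sbRho0 ρ1 b := by
  have hθa : 0 ≤ sbTheta ρ1 a := sbTheta_nonneg hρ1cont hρ1pos ha
  have hθ : sbTheta ρ1 a < sbTheta ρ1 b := sbTheta_lt hρ1cont hρ1pos ha hab
  have hs : Real.sqrt (2 * sbTheta ρ1 a) < Real.sqrt (2 * sbTheta ρ1 b) :=
    Real.sqrt_lt_sqrt (by linarith) (by linarith)
  have h1 : ρ1 a * Real.sqrt (2 * sbTheta ρ1 a) ≤ ρ1 b * Real.sqrt (2 * sbTheta ρ1 a) :=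
    mul_le_mul_of_nonneg_right (hρ1mono ha (le_trans ha hab.le) hab.le) (Real.sqrt_nonneg _)
  have h2 : ρ1 b * Real.sqrt (2 * sbTheta ρ1 a) < ρ1 b * Real.sqrt (2 * sbTheta ρ1 b) :=
    mul_lt_mul_of_pos_left hs (hρ1pos b (le_trans ha hab.le))
  calc sbRho0 ρ1 a = ρ1 a * Real.sqrt (2 * sbTheta ρ1 a) := rfl
    _ < ρ1 b * Real.sqrt (2 * sbTheta ρ1 b) := lt_of_le_of_lt h1 h2
    _ = sbRho0 ρ1 b := rfl

include hρ1mono hρ1cont hρ1pos in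
lemma sbRho0_sq_ge {x : ℝ} (hx : 0 ≤ x) : 2 * ρ1 x * x ≤ (sbRho0 ρ1 x) ^ 2 := by
  have hθ : x / ρ1 x ≤ sbTheta ρ1 x := sbTheta_ge hρ1mono hρ1cont hρ1pos hx
  have hθ0 : 0 ≤ sbTheta ρ1 x := sbTheta_nonneg hρ1cont hρ1pos hx
  have hρ : 0 < ρ1 x := hρ1pos x hx
  have : (sbRho0 ρ1 x) ^ 2 = (ρ1 x) ^ 2 * (2 * sbTheta ρ1 x) := by
    rw [sbRho0, mul_pow, Real.sq_sqrt (by linarith)]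
  rw [this]
  have h2 : 2 * ρ1 x * x = (ρ1 x) ^ 2 * (2 * (x / ρ1 x)) := by
    field_simp
  rw [h2]
  have : 2 * (x / ρ1 x) ≤ 2 * sbTheta ρ1 x := by linarith
  exact mul_le_mul_of_nonneg_left this (sq_nonneg _)

end ThetaLemmas

lemma sb_grad_sq_le {d : ℕ}
    {F : EuclideanSpace ℝ (Fin d) → ℝ} (hF : ContDiff ℝ 2 F) (hFnn : ∀ w, 0 ≤ F w)
    {ρ1 : ℝ → ℝ} (hρ1mono : MonotoneOn ρ1 (Set.Ici 0))
    (hρ1pos : ∀ x ∈ Set.Ici (0 : ℝ), 0 < ρ1 x)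
    (hbound : ∀ w, ‖fderiv ℝ (fderiv ℝ F) w‖ ≤ ρ1 (F w))
    (w : EuclideanSpace ℝ (Fin d)) :
    ‖fderiv ℝ F w‖ ^ 2 ≤ 2 * ρ1 (F w) * F w := by
  set g := ‖fderiv ℝ F w‖ with hgdef
  have hgnn : (0:ℝ) ≤ g := norm_nonneg _
  rcases eq_or_lt_of_le hgnn with hg | hg
  · rw [← hg]
    simpa using mul_nonneg (mul_nonneg (by norm_num : (0:ℝ) ≤ 2) (hρ1pos _ (hFnn w)).le)
      (hFnn w)
  set M := ρ1 (F w) with hMdef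
  have hM : 0 < M := hρ1pos _ (hFnn w)
  set z := (InnerProductSpace.toDual ℝ (EuclideanSpace ℝ (Fin d))).symm (fderiv ℝ F w)
    with hzdef
  have hz : ‖z‖ = g := by
    rw [hzdef]
    exact ((InnerProductSpace.toDual ℝ _).symm.norm_map _)
  set v := -(g⁻¹ • z) with hvdef
  have hv : ‖v‖ = 1 := by
    rw [hvdef, norm_neg, norm_smul, hz, norm_inv, Real.norm_eq_abs, abs_of_pos hg]
    field_simp
  have hφv : (fderiv ℝ F w) v = -g := by
    have h1 : (inner ℝ z v : ℝ) = (fderiv ℝ F w) v := InnerProductSpace.toDual_symm_apply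
    rw [← h1, hvdef, inner_neg_right, real_inner_smul_right, real_inner_self_eq_norm_sq, hz]
    have hgne : g ≠ 0 := hg.ne'
    field_simp
  have hF1 : Differentiable ℝ F := hF.differentiable two_ne_zero
  have hdF : Differentiable ℝ (fderiv ℝ F) :=
    (hF.fderiv_right (le_refl 2)).differentiable one_ne_zero
  set c : ℝ → EuclideanSpace ℝ (Fin d) := fun s => w + s • v with hcdef
  have hc : ∀ s, HasDerivAt c v s := by
    intro s
    exact (((hasDerivAt_id s).smul_const v).const_add w).congr_deriv (one_smul ℝ v)
  have hc0 : c 0 = w := by simp [hcdef]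
  set h : ℝ → ℝ := fun s => F (c s) with hhdef
  set h' : ℝ → ℝ := fun s => (fderiv ℝ F (c s)) v with hh'def
  set h'' : ℝ → ℝ := fun s => ((fderiv ℝ (fderiv ℝ F) (c s)) v) v with hh''def
  have hh : ∀ s, HasDerivAt h (h' s) s := by
    intro s
    have := (hF1 (c s)).hasFDerivAt.comp_hasDerivAt s (hc s)
    exact this
  have hD : ∀ s, HasDerivAt (fun s => fderiv ℝ F (c s))
      ((fderiv ℝ (fderiv ℝ F) (c s)) v) s := by
    intro s
    have := (hdF (c s)).hasFDerivAt.comp_hasDerivAt s (hc s)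
    exact this
  have hh' : ∀ s, HasDerivAt h' (h'' s) s := by
    intro s
    have := (hD s).clm_apply (hasDerivAt_const s v)
    simpa using this
  have hh0 : h 0 = F w := by show F (c 0) = F w; rw [hc0]
  have h'0 : h' 0 = -g := by show (fderiv ℝ F (c 0)) v = -g; rw [hc0, hφv]
  have hbnd : ∀ s, |h'' s| ≤ ρ1 (h s) := by
    intro s
    have h1 := ContinuousLinearMap.le_opNorm ((fderiv ℝ (fderiv ℝ F) (c s)) v) v
    have h2 := ContinuousLinearMap.le_opNorm (fderiv ℝ (fderiv ℝ F) (c s)) v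
    rw [hv, mul_one] at h1 h2
    have h3 := hbound (c s)
    have h4 : |h'' s| = ‖((fderiv ℝ (fderiv ℝ F) (c s)) v) v‖ := (Real.norm_eq_abs _).symm
    rw [h4]
    show ‖((fderiv ℝ (fderiv ℝ F) (c s)) v) v‖ ≤ ρ1 (F (c s))
    linarith
  have hhnn : ∀ s, 0 ≤ h s := fun s => hFnn (c s)
  -- key fencing for h'
  have key : ∀ b : ℝ, 0 ≤ b → (∀ t ∈ Icc (0:ℝ) b, h t ≤ h 0) →
      ∀ x ∈ Icc (0:ℝ) b, h' x ≤ -g + M * x := by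
    intro b hb hhle x hx
    refine image_le_of_deriv_right_le_deriv_boundary (f := h') (f' := h'')
      (B := fun x => -g + M * x) (B' := fun _ => M) ?_ ?_ ?_ ?_ ?_ ?_ hx
    · exact fun t _ => (hh' t).continuousAt.continuousWithinAt
    · exact fun t _ => (hh' t).hasDerivWithinAt
    · rw [h'0]; simp
    · exact (continuous_const.add (continuous_const.mul continuous_id)).continuousOn
    · intro t _
      simpa using (((hasDerivAt_id t).const_mul M).const_add (-g)).hasDerivWithinAt
    · intro t ht
      have h1 := hbnd t
      have h2 : ρ1 (h t) ≤ M := by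
        rw [hMdef]
        refine hρ1mono (hhnn t) (hFnn w) ?_
        have := hhle t ⟨ht.1, ht.2.le⟩
        rw [hh0] at this
        exact this
      have := le_abs_self (h'' t)
      linarith
  set T := g / M with hTdef
  have hT : 0 < T := div_pos hg hM
  set A : Set ℝ := {s | s ∈ Icc 0 T ∧ ∀ t ∈ Icc (0:ℝ) s, h t ≤ h 0} with hAdef
  have hA0 : (0:ℝ) ∈ A := by
    constructor
    · exact ⟨le_rfl, hT.le⟩
    · intro t ht
      have : t = 0 := le_antisymm ht.2 ht.1
      rw [this]
  have hAbdd : BddAbove A := ⟨T, fun s hs => hs.1.2⟩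
  have hAne : A.Nonempty := ⟨0, hA0⟩
  set S := sSup A with hSdef
  have hS0 : 0 ≤ S := le_csSup hAbdd hA0
  have hST : S ≤ T := csSup_le hAne (fun s hs => hs.1.2)
  have hlt : ∀ t, 0 ≤ t → t < S → h t ≤ h 0 := by
    intro t ht0 htS
    obtain ⟨s, hsA, hts⟩ := exists_lt_of_lt_csSup hAne htS
    exact hsA.2 t ⟨ht0, hts.le⟩
  have hSmem : ∀ t ∈ Icc (0:ℝ) S, h t ≤ h 0 := by
    intro t ht
    rcases lt_or_eq_of_le ht.2 with h1 | h1
    · exact hlt t ht.1 h1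
    · rcases eq_or_lt_of_le ht.1 with h2 | h2
      · rw [← h2]
      · -- 0 < t = S, use continuity from the left
        rw [h1] at h2 ⊢
        have hcont : Filter.Tendsto h (nhdsWithin S (Iio S)) (nhds (h S)) :=
          (hh S).continuousAt.continuousWithinAt
        refine le_of_tendsto hcont ?_
        filter_upwards [Ioo_mem_nhdsLT_of_mem (show S ∈ Ioc (0:ℝ) S from ⟨h2, le_rfl⟩)]
          with s hs
        exact hlt s hs.1.le hs.2
  have hSA : S ∈ A := ⟨⟨hS0, hST⟩, hSmem⟩
  have hSeqT : S = T := by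
    by_contra hne
    have hSltT : S < T := lt_of_le_of_ne hST hne
    have hd : h' S ≤ -g + M * S := key S hS0 hSmem S ⟨hS0, le_rfl⟩
    have hd' : h' S < 0 := by
      have : M * S < M * T := mul_lt_mul_of_pos_left hSltT hM
      have hMT : M * T = g := by rw [hTdef]; field_simp
      linarith
    -- slope argument to the right of S
    have hslope : Filter.Tendsto (slope h S) (nhdsWithin S (Ioi S)) (nhds (h' S)) := by
      have := ((hh S).hasDerivWithinAt (s := Ioi S))
      rw [hasDerivWithinAt_iff_tendsto_slope] at this
      simpa using this
    have hev : ∀ᶠ s in nhdsWithin S (Ioi S), slope h S s < 0 :=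
      hslope.eventually_lt_const hd'
    obtain ⟨u, hu, hsub⟩ := mem_nhdsGT_iff_exists_Ioo_subset.mp hev
    set s2 := min ((S + u) / 2) T with hs2def
    have hs2gt : S < s2 := by
      apply lt_min
      · have : S < u := hu
        linarith
      · exact hSltT
    have hs2A : s2 ∈ A := by
      constructor
      · exact ⟨le_trans hS0 hs2gt.le, min_le_right _ _⟩
      · intro t ht
        rcases le_or_gt t S with h1 | h1
        · exact hSmem t ⟨ht.1, h1⟩
        · have htu : t < u := by
            have h2 : t ≤ (S + u) / 2 := le_trans ht.2 (min_le_left _ _)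
            have : S < u := hu
            linarith
          have := hsub ⟨h1, htu⟩
          have hslope_neg : slope h S t < 0 := this
          rw [slope_def_field] at hslope_neg
          have hts : 0 < t - S := by linarith
          have heq : (h t - h S) / (t - S) * (t - S) = h t - h S :=
            div_mul_cancel₀ _ hts.ne'
          have hneg := mul_neg_of_neg_of_pos hslope_neg hts
          rw [heq] at hneg
          have hhS := hSmem S ⟨hS0, le_rfl⟩
          linarith
    have := le_csSup hAbdd hs2A
    linarith
  -- final fencing for h on [0, T]
  have hTmem : ∀ t ∈ Icc (0:ℝ) T, h t ≤ h 0 := by rw [← hSeqT]; exact hSmem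
  have hd : ∀ x ∈ Icc (0:ℝ) T, h' x ≤ -g + M * x := key T hT.le hTmem
  have hfinal : h T ≤ h 0 - g * T + M * T ^ 2 / 2 := by
    refine image_le_of_deriv_right_le_deriv_boundary (f := h) (f' := h')
      (B := fun x => h 0 - g * x + M * x ^ 2 / 2) (B' := fun x => -g + M * x)
      ?_ ?_ ?_ ?_ ?_ ?_ (⟨hT.le, le_rfl⟩ : T ∈ Icc 0 T)
    · exact fun t _ => (hh t).continuousAt.continuousWithinAt
    · exact fun t _ => (hh t).hasDerivWithinAt
    · simp
    · exact ((continuous_const.sub (continuous_const.mul continuous_id)).add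
        ((continuous_const.mul (continuous_pow 2)).div_const 2)).continuousOn
    · intro t _
      have : HasDerivAt (fun x => h 0 - g * x + M * x ^ 2 / 2) (-g + M * t) t := by
        have h1 : HasDerivAt (fun x : ℝ => h 0 - g * x) (-g) t := by
          simpa using ((hasDerivAt_id t).const_mul g).const_sub (h 0)
        have h2 : HasDerivAt (fun x : ℝ => M * x ^ 2 / 2) (M * t) t := by
          have := ((hasDerivAt_pow 2 t).const_mul M).div_const 2
          exact this.congr_deriv (by norm_num; ring)
        exact h1.add h2
      exact this.hasDerivWithinAt
    · intro t ht
      exact hd t ⟨ht.1, ht.2.le⟩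
  have hhT : 0 ≤ h T := hhnn T
  have hMT : M * T = g := by rw [hTdef]; field_simp
  have hgT : g * T = g ^ 2 / M := by rw [hTdef]; field_simp
  rw [hh0] at hfinal
  have hT2 : M * T ^ 2 / 2 = g ^ 2 / (2 * M) := by
    rw [hTdef]; field_simp
  rw [hgT, hT2] at hfinal

  have h2M : 0 < 2 * M := by linarith
  have : g ^ 2 / M - g ^ 2 / (2 * M) = g ^ 2 / (2 * M) := by
    field_simp; ring
  have hle : g ^ 2 / (2 * M) ≤ F w := by linarith
  calc g ^ 2 = (g ^ 2 / (2 * M)) * (2 * M) := by field_simp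
    _ ≤ F w * (2 * M) := mul_le_mul_of_nonneg_right hle h2M.le
    _ = 2 * M * F w := by ring

lemma sb_grad_le_rho0 {d : ℕ}
    {F : EuclideanSpace ℝ (Fin d) → ℝ} (hF : ContDiff ℝ 2 F) (hFnn : ∀ w, 0 ≤ F w)
    {ρ1 : ℝ → ℝ} (hρ1mono : MonotoneOn ρ1 (Set.Ici 0))
    (hρ1cont : ContinuousOn ρ1 (Set.Ici 0))
    (hρ1pos : ∀ x ∈ Set.Ici (0 : ℝ), 0 < ρ1 x)
    (hbound : ∀ w, ‖fderiv ℝ (fderiv ℝ F) w‖ ≤ ρ1 (F w))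
    (w : EuclideanSpace ℝ (Fin d)) :
    ‖fderiv ℝ F w‖ ≤ sbRho0 ρ1 (F w) := by
  have hsq := sb_grad_sq_le hF hFnn hρ1mono hρ1pos hbound w
  have h2 := sbRho0_sq_ge hρ1mono hρ1cont hρ1pos (hFnn w)
  calc ‖fderiv ℝ F w‖ = Real.sqrt (‖fderiv ℝ F w‖ ^ 2) :=
        (Real.sqrt_sq (norm_nonneg _)).symm
    _ ≤ Real.sqrt ((sbRho0 ρ1 (F w)) ^ 2) := Real.sqrt_le_sqrt (by linarith)
    _ = sbRho0 ρ1 (F w) := Real.sqrt_sq (sbRho0_nonneg hρ1pos (hFnn w))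

lemma sb_sublevel {d : ℕ}
    {F : EuclideanSpace ℝ (Fin d) → ℝ} (hF : ContDiff ℝ 2 F) (hFnn : ∀ w, 0 ≤ F w)
    {ρ1 : ℝ → ℝ} (hρ1mono : MonotoneOn ρ1 (Set.Ici 0))
    (hρ1cont : ContinuousOn ρ1 (Set.Ici 0))
    (hρ1pos : ∀ x ∈ Set.Ici (0 : ℝ), 0 < ρ1 x)
    (hbound : ∀ w, ‖fderiv ℝ (fderiv ℝ F) w‖ ≤ ρ1 (F w))
    {C : ℝ} (hC : 0 ≤ C) (w u : EuclideanSpace ℝ (Fin d))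
    (hw : F w ≤ C) (hu : ‖u - w‖ ≤ 1 / sbRho0 ρ1 (C + 1)) :
    F u ≤ C + 1 := by
  have hF1 : Differentiable ℝ F := hF.differentiable two_ne_zero
  set r := ‖u - w‖ with hrdef
  have hrnn : (0:ℝ) ≤ r := norm_nonneg _
  set c : ℝ → EuclideanSpace ℝ (Fin d) := fun t => w + t • (u - w) with hcdef
  have hc : ∀ t, HasDerivAt c (u - w) t := by
    intro t
    exact (((hasDerivAt_id t).smul_const (u - w)).const_add w).congr_deriv (one_smul ℝ (u - w))
  have hc0 : c 0 = w := by simp [hcdef]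
  have hc1 : c 1 = u := by simp [hcdef]
  set g : ℝ → ℝ := fun t => F (c t) with hgdef
  set g' : ℝ → ℝ := fun t => (fderiv ℝ F (c t)) (u - w) with hg'def
  have hg : ∀ t, HasDerivAt g (g' t) t := by
    intro t
    have := (hF1 (c t)).hasFDerivAt.comp_hasDerivAt t (hc t)
    exact this
  have hg0 : g 0 = F w := by show F (c 0) = F w; rw [hc0]
  have hg1 : g 1 = F u := by show F (c 1) = F u; rw [hc1]
  have hres : g 1 ≤ C + 1 := by
    have := image_le_of_deriv_right_lt_deriv_boundary (f := g) (f' := g')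
      (B := fun t => C + t) (B' := fun _ => (1:ℝ)) (a := 0) (b := 1)
      (fun t _ => (hg t).continuousAt.continuousWithinAt)
      (fun t _ => (hg t).hasDerivWithinAt)
      (by rw [hg0]; simpa using hw)
      (fun x => by simpa using (hasDerivAt_id x).const_add C)
      ?_ (⟨zero_le_one, le_rfl⟩ : (1:ℝ) ∈ Icc (0:ℝ) 1)
    · simpa using this
    · intro t ht hcontact
      have hFct : F (c t) = C + t := hcontact
      show g' t < 1
      have h1 : g' t ≤ ‖fderiv ℝ F (c t)‖ * r := by
        calc g' t ≤ |g' t| := le_abs_self _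
          _ = ‖(fderiv ℝ F (c t)) (u - w)‖ := (Real.norm_eq_abs _).symm
          _ ≤ ‖fderiv ℝ F (c t)‖ * ‖u - w‖ := ContinuousLinearMap.le_opNorm _ _
      rcases eq_or_lt_of_le hrnn with hr | hr
      · rw [← hr, mul_zero] at h1
        linarith
      · have h2 : ‖fderiv ℝ F (c t)‖ ≤ sbRho0 ρ1 (F (c t)) :=
          sb_grad_le_rho0 hF hFnn hρ1mono hρ1cont hρ1pos hbound (c t)
        have h3 : sbRho0 ρ1 (F (c t)) = sbRho0 ρ1 (C + t) := by rw [hFct]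
        have h4 : sbRho0 ρ1 (C + t) < sbRho0 ρ1 (C + 1) :=
          sbRho0_lt hρ1mono hρ1cont hρ1pos (by linarith [ht.1] : (0:ℝ) ≤ C + t)
            (by linarith [ht.2] : C + t < C + 1)
        have h5 : 0 < sbRho0 ρ1 (C + 1) := sbRho0_pos hρ1cont hρ1pos (by linarith)
        have h6 : sbRho0 ρ1 (C + 1) * r ≤ 1 := by
          rw [le_div_iff₀ h5] at hu
          linarith
        have h7 : ‖fderiv ℝ F (c t)‖ * r ≤ sbRho0 ρ1 (C + t) * r := by
          apply mul_le_mul_of_nonneg_right _ hrnn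
          rw [← h3]; exact h2
        have h8 : sbRho0 ρ1 (C + t) * r < sbRho0 ρ1 (C + 1) * r :=
          mul_lt_mul_of_pos_right h4 hr
        show g' t < 1
        linarith
  rw [hg1] at hres
  exact hres

/-- Under the second-order self-bounding assumption, for every `w` in the `F(w0)`-sublevel
set and every `u` with `‖u − w‖ ≤ 1/ρ0(F(w0)+1)`, one has `‖∇²F(u)‖ ≤ L1(w0)`. -/
theorem local_smoothness_bound_of_selfbounding (d : ℕ) (hd : 1 ≤ d)
    (F : EuclideanSpace ℝ (Fin d) → ℝ)
    (hF : ContDiff ℝ 2 F) (hFnn : ∀ w, 0 ≤ F w)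
    (ρ1 : ℝ → ℝ) (hρ1mono : MonotoneOn ρ1 (Set.Ici 0))
    (hρ1cont : ContinuousOn ρ1 (Set.Ici 0))
    (hρ1pos : ∀ x ∈ Set.Ici (0 : ℝ), 0 < ρ1 x)
    (hbound : ∀ w, ‖fderiv ℝ (fderiv ℝ F) w‖ ≤ ρ1 (F w))
    (w0 : EuclideanSpace ℝ (Fin d)) (L1w0 : ℝ)
    (hL1w0 : L1w0 = max (max 1 (sbRho0 ρ1 (F w0 + 1)))
      (max (sbRho0 ρ1 (F w0) * sbRho0 ρ1 (F w0 + 1)) (ρ1 (F w0 + 1)))) :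
    ∀ w : EuclideanSpace ℝ (Fin d), F w ≤ F w0 →
      ∀ u : EuclideanSpace ℝ (Fin d), ‖u - w‖ ≤ 1 / sbRho0 ρ1 (F w0 + 1) →
        ‖fderiv ℝ (fderiv ℝ F) u‖ ≤ L1w0 := by
  intro w hw u hu
  have hFu : F u ≤ F w0 + 1 :=
    sb_sublevel hF hFnn hρ1mono hρ1cont hρ1pos hbound (hFnn w0) w u hw hu
  calc ‖fderiv ℝ (fderiv ℝ F) u‖ ≤ ρ1 (F u) := hbound u
    _ ≤ ρ1 (F w0 + 1) :=
        hρ1mono (hFnn u) (by linarith [hFnn w0] : (0:ℝ) ≤ F w0 + 1) hFu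
    _ ≤ L1w0 := by
        rw [hL1w0]
        exact le_trans (le_max_right _ _) (le_max_right _ _)
end

section
/- Under the second-order self-bounding assumption, fix w0 ∈ E, set L1(w0) = max{1, ρ0(F(w0)+1), ρ0(F(w0))·ρ0(F(w0)+1), ρ1(F(w0)+1)} and η = 1/L1(w0). For any ε > 0 and any u0 ∈ E with F(u0) ≤ F(w0) and ‖∇F(u0)‖ > ε, one has F(u0 − η·∇F(u0)) < F(u0) − ε²/(2·L1(w0)). -/
open Set InnerProductSpace


variable {ρ1 : ℝ → ℝ}

lemma sb_intble (hρ1cont : ContinuousOn ρ1 (Set.Ici 0))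
    (hρ1pos : ∀ x ∈ Set.Ici (0:ℝ), 0 < ρ1 x) {a b : ℝ} (ha : 0 ≤ a) (hab : a ≤ b) :
    IntervalIntegrable (fun v => 1 / ρ1 v) MeasureTheory.volume a b := by
  apply ContinuousOn.intervalIntegrable
  rw [uIcc_of_le hab]
  have hsub : Icc a b ⊆ Ici (0:ℝ) := fun x hx => le_trans ha hx.1
  exact ContinuousOn.div continuousOn_const (hρ1cont.mono hsub)
    (fun x hx => (hρ1pos x (hsub hx)).ne')

lemma sb_theta_lb (hρ1mono : MonotoneOn ρ1 (Set.Ici 0))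
    (hρ1cont : ContinuousOn ρ1 (Set.Ici 0))
    (hρ1pos : ∀ x ∈ Set.Ici (0:ℝ), 0 < ρ1 x) {x : ℝ} (hx : 0 ≤ x) :
    x / ρ1 x ≤ sbTheta ρ1 x := by
  have h1 : ∫ v in (0:ℝ)..x, 1 / ρ1 x ≤ sbTheta ρ1 x := by
    apply intervalIntegral.integral_mono_on hx (intervalIntegrable_const)
      (sb_intble hρ1cont hρ1pos le_rfl hx)
    intro v hv
    exact one_div_le_one_div_of_le (hρ1pos v hv.1)
      (hρ1mono hv.1 hx (hv.2))
  simpa [div_eq_mul_inv, mul_comm] using h1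

lemma sb_theta_nonneg (hρ1mono : MonotoneOn ρ1 (Set.Ici 0))
    (hρ1cont : ContinuousOn ρ1 (Set.Ici 0))
    (hρ1pos : ∀ x ∈ Set.Ici (0:ℝ), 0 < ρ1 x) {x : ℝ} (hx : 0 ≤ x) :
    0 ≤ sbTheta ρ1 x := by
  refine le_trans ?_ (sb_theta_lb hρ1mono hρ1cont hρ1pos hx)
  exact div_nonneg hx (hρ1pos x hx).le

lemma sb_rho0_nonneg (hρ1pos : ∀ x ∈ Set.Ici (0:ℝ), 0 < ρ1 x) {x : ℝ} (hx : 0 ≤ x) :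
    0 ≤ sbRho0 ρ1 x :=
  mul_nonneg (hρ1pos x hx).le (Real.sqrt_nonneg _)

lemma sb_rho0_mono (hρ1mono : MonotoneOn ρ1 (Set.Ici 0))
    (hρ1cont : ContinuousOn ρ1 (Set.Ici 0))
    (hρ1pos : ∀ x ∈ Set.Ici (0:ℝ), 0 < ρ1 x) {x y : ℝ} (hx : 0 ≤ x) (hxy : x ≤ y) :
    sbRho0 ρ1 x ≤ sbRho0 ρ1 y := by
  have hy : 0 ≤ y := hx.trans hxy
  have hθ : sbTheta ρ1 x ≤ sbTheta ρ1 y := by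
    have hadd := intervalIntegral.integral_add_adjacent_intervals
      (sb_intble hρ1cont hρ1pos le_rfl hx) (sb_intble hρ1cont hρ1pos hx hxy)
    have hnn : 0 ≤ ∫ v in x..y, 1 / ρ1 v := by
      apply intervalIntegral.integral_nonneg hxy
      intro u hu
      have hu0 : (0:ℝ) ≤ u := hx.trans hu.1
      exact div_nonneg zero_le_one (hρ1pos u hu0).le
    have : sbTheta ρ1 x + ∫ v in x..y, 1 / ρ1 v = sbTheta ρ1 y := hadd
    linarith
  exact mul_le_mul (hρ1mono hx hy hxy) (Real.sqrt_le_sqrt (by linarith))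
    (Real.sqrt_nonneg _) (hρ1pos y hy).le

open Set InnerProductSpace

open Set

/-- Mean value inequality: if `f' ≤ K` on `[a,b]` then `f t ≤ f a + K (t - a)` there. -/
lemma sb_mvt_le (f f' : ℝ → ℝ) (a b K : ℝ)
    (hd : ∀ t, HasDerivAt f (f' t) t)
    (hb : ∀ t ∈ Icc a b, f' t ≤ K) :
    ∀ t ∈ Icc a b, f t ≤ f a + K * (t - a) := by
  intro t ht
  have hψd : ∀ s, HasDerivAt (fun s => f a + K * (s - a) - f s) (K - f' s) s := by
    intro s
    have h1 : HasDerivAt (fun s : ℝ => f a + K * (s - a)) K s := by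
      simpa using (((hasDerivAt_id s).sub_const a).const_mul K).const_add (f a)
    exact h1.sub (hd s)
  have hmono : MonotoneOn (fun s => f a + K * (s - a) - f s) (Icc a b) := by
    apply monotoneOn_of_deriv_nonneg (convex_Icc a b)
    · exact (Continuous.continuousOn (by
        exact (continuous_const.add (continuous_const.mul (continuous_id.sub continuous_const))).sub
          (continuous_iff_continuousAt.2 fun s => (hd s).continuousAt)))
    · exact fun s hs => ((hψd s).differentiableAt).differentiableWithinAt
    · intro s hs
      rw [(hψd s).deriv]
      have : s ∈ Icc a b := interior_subset hs
      linarith [hb s this]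
  have h0 : a ∈ Icc a b := ⟨le_refl a, ht.1.trans ht.2⟩
  have := hmono h0 ht ht.1
  simp at this
  linarith

/-- Second-order Taylor upper bound on `[0,T]`. -/
lemma sb_taylor (f f' f'' : ℝ → ℝ) (T L : ℝ) (hT : 0 ≤ T)
    (hd1 : ∀ t, HasDerivAt f (f' t) t) (hd2 : ∀ t, HasDerivAt f' (f'' t) t)
    (hb : ∀ t ∈ Icc (0:ℝ) T, f'' t ≤ L) :
    f T ≤ f 0 + f' 0 * T + L * T ^ 2 / 2 := by
  have h1 : ∀ t ∈ Icc (0:ℝ) T, f' t ≤ f' 0 + L * (t - 0) := sb_mvt_le f' f'' 0 T L hd2 hb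
  have hψd : ∀ s, HasDerivAt (fun s => f 0 + f' 0 * s + L * s ^ 2 / 2 - f s)
      (f' 0 + L * s - f' s) s := by
    intro s
    have h2 : HasDerivAt (fun s : ℝ => f 0 + f' 0 * s + L * s ^ 2 / 2)
        (f' 0 + L * s) s := by
      have ha : HasDerivAt (fun s : ℝ => f' 0 * s) (f' 0) s := by
        simpa using (hasDerivAt_id s).const_mul (f' 0)
      have hb' : HasDerivAt (fun s : ℝ => L * s ^ 2 / 2) (L * s) s := by
        have := ((hasDerivAt_pow 2 s).const_mul L).div_const 2
        refine this.congr_deriv ?_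
        ring
      exact (ha.const_add (f 0)).add hb'
    exact h2.sub (hd1 s)
  have hmono : MonotoneOn (fun s => f 0 + f' 0 * s + L * s ^ 2 / 2 - f s) (Icc 0 T) := by
    apply monotoneOn_of_deriv_nonneg (convex_Icc 0 T)
    · exact Continuous.continuousOn (by
        exact ((continuous_const.add (continuous_const.mul continuous_id)).add
          ((continuous_const.mul (continuous_pow 2)).div_const 2)).sub
          (continuous_iff_continuousAt.2 fun s => (hd1 s).continuousAt))
    · exact fun s hs => ((hψd s).differentiableAt).differentiableWithinAt
    · intro s hs
      rw [(hψd s).deriv]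
      have hs' : s ∈ Icc 0 T := interior_subset hs
      linarith [h1 s hs']
  have := hmono ⟨le_refl 0, hT⟩ ⟨hT, le_refl T⟩ hT
  simp at this
  linarith

/-- Forward invariance bootstrap lemma. -/
lemma sb_invariant (f B : ℝ → ℝ) (hf : Continuous f) (hB : Continuous B) (T : ℝ)
    (h0 : f 0 ≤ B 0)
    (step : ∀ c, 0 ≤ c → c < T → (∀ s ∈ Icc (0:ℝ) c, f s ≤ B s) →
      ∃ δ > 0, ∀ s ∈ Icc c (min (c + δ) T), f s ≤ B s) :
    ∀ t ∈ Icc (0:ℝ) T, f t ≤ B t := by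
  intro t ht
  have hT : (0:ℝ) ≤ T := ht.1.trans ht.2
  set S : Set ℝ := {x ∈ Icc (0:ℝ) T | ∀ s ∈ Icc (0:ℝ) x, f s ≤ B s} with hS
  have hS0 : (0:ℝ) ∈ S := by
    refine ⟨⟨le_refl 0, hT⟩, fun s hs => ?_⟩
    have : s = 0 := le_antisymm hs.2 hs.1
    simpa [this] using h0
  have hSne : S.Nonempty := ⟨0, hS0⟩
  have hbdd : BddAbove S := ⟨T, fun x hx => hx.1.2⟩
  set c := sSup S with hc
  have hc0 : 0 ≤ c := le_csSup hbdd hS0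
  have hcT : c ≤ T := csSup_le hSne fun x hx => hx.1.2
  have hlt : ∀ s, 0 ≤ s → s < c → f s ≤ B s := by
    intro s hs0 hsc
    obtain ⟨x, hxS, hsx⟩ := exists_lt_of_lt_csSup hSne hsc
    exact hxS.2 s ⟨hs0, hsx.le⟩
  have hcS : c ∈ S := by
    refine ⟨⟨hc0, hcT⟩, fun s hs => ?_⟩
    rcases lt_or_eq_of_le hs.2 with h | h
    · exact hlt s hs.1 h
    · subst h
      rcases eq_or_lt_of_le hc0 with h0' | h0'
      · simpa [← h0'] using h0
      · have hcl : c ∈ closure (Ico 0 c) := by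
          rw [closure_Ico h0'.ne]
          exact ⟨hc0, le_refl c⟩
        have hsub : Ico 0 c ⊆ {x | f x ≤ B x} := fun x hx => hlt x hx.1 hx.2
        exact (isClosed_le hf hB).closure_subset ((closure_mono hsub) hcl)
  rcases eq_or_lt_of_le hcT with hceq | hclt
  · exact hcS.2 t ⟨ht.1, by rw [hceq]; exact ht.2⟩
  · obtain ⟨δ, hδ, hstep⟩ := step c hc0 hclt hcS.2
    have hmem : min (c + δ) T ∈ S := by
      refine ⟨⟨le_min (by linarith) hT, min_le_right _ _⟩, fun s hs => ?_⟩
      rcases le_total s c with h | h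
      · exact hcS.2 s ⟨hs.1, h⟩
      · exact hstep s ⟨h, hs.2⟩
    have : min (c + δ) T ≤ c := le_csSup hbdd hmem
    have : c < min (c + δ) T := lt_min (by linarith) hclt
    linarith
/-- 1D self-bounding key inequality: `(f'(0))² ≤ 2 L f(0)`. -/
lemma sb_key1d (f f' f'' : ℝ → ℝ) (L : ℝ) (hL : 0 < L)
    (hd1 : ∀ t, HasDerivAt f (f' t) t) (hd2 : ∀ t, HasDerivAt f' (f'' t) t)
    (hnn : ∀ t, 0 ≤ f t) (hneg : f' 0 ≤ 0)
    (hb : ∀ t, 0 ≤ t → f t ≤ f 0 → f'' t ≤ L) :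
    (f' 0) ^ 2 ≤ 2 * L * f 0 := by
  rcases eq_or_lt_of_le hneg with h0 | h0
  · rw [h0]
    nlinarith [hnn 0]
  set a : ℝ := -(f' 0) with ha
  have ha0 : 0 < a := by simp [ha]; linarith
  set T : ℝ := a / L with hT
  have hT0 : 0 < T := div_pos ha0 hL
  have hfc : Continuous f := continuous_iff_continuousAt.2 fun s => (hd1 s).continuousAt
  have hf'c : Continuous f' := continuous_iff_continuousAt.2 fun s => (hd2 s).continuousAt
  -- invariance: f stays ≤ f 0 on [0, T]
  have hinv : ∀ t ∈ Icc (0:ℝ) T, f t ≤ f 0 := by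
    apply sb_invariant f (fun _ => f 0) hfc continuous_const T le_rfl
    intro c hc0 hcT hsub
    -- on [0,c], f'' ≤ L, hence f' c ≤ f' 0 + L c < 0
    have hf'' : ∀ s ∈ Icc (0:ℝ) c, f'' s ≤ L := fun s hs => hb s hs.1 (hsub s hs)
    have hf'c' : f' c ≤ f' 0 + L * (c - 0) :=
      sb_mvt_le f' f'' 0 c L hd2 hf'' c ⟨hc0, le_refl c⟩
    have hf'neg : f' c < 0 := by
      have : L * c < L * T := by exact (mul_lt_mul_iff_right₀ hL).2 hcT
      have : L * T = a := by rw [hT]; field_simp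
      nlinarith [(mul_lt_mul_iff_right₀ hL).2 hcT]
    -- f' < 0 near c
    have hcont := hf'c.continuousAt (x := c)
    rw [Metric.continuousAt_iff] at hcont
    obtain ⟨δ, hδ, hball⟩ := hcont (-(f' c)) (by linarith)
    refine ⟨δ / 2, by linarith, ?_⟩
    have hf'le : ∀ s ∈ Icc c (min (c + δ/2) T), f' s ≤ 0 := by
      intro s hs
      have h1 : dist s c < δ := by
        rw [Real.dist_eq, abs_lt]
        have := hs.2
        have : s ≤ c + δ/2 := le_trans this (min_le_left _ _)
        constructor <;> [linarith [hs.1]; linarith]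
      have := hball h1
      rw [Real.dist_eq, abs_lt] at this
      linarith [this.2]
    intro s hs
    have := sb_mvt_le f f' c (min (c + δ/2) T) 0 hd1 hf'le s hs
    have hfc' : f c ≤ f 0 := hsub c ⟨hc0, le_refl c⟩
    simpa using le_trans this (by linarith)
  -- now f'' ≤ L on [0,T], Taylor gives contradiction-free bound
  have htay := sb_taylor f f' f'' T L hT0.le hd1 hd2
    (fun t ht => hb t ht.1 (hinv t ht))
  have hfT : 0 ≤ f T := hnn T
  have hLT : L * T = a := by rw [hT]; field_simp
  have hT2 : L * T ^ 2 = a * T := by rw [pow_two]; rw [← mul_assoc, hLT]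
  have : f' 0 * T = -(a * T) := by rw [ha]; ring
  have hTa : a * T = a ^ 2 / L := by rw [hT, pow_two]; ring
  have h2 : (f' 0) ^ 2 = a ^ 2 := by rw [ha]; ring
  rw [h2]
  have : f T ≤ f 0 - a ^ 2 / L + a ^ 2 / L / 2 := by
    calc f T ≤ f 0 + f' 0 * T + L * T ^ 2 / 2 := htay
    _ = f 0 - a * T + a * T / 2 := by rw [‹f' 0 * T = -(a * T)›, hT2]; ring
    _ = f 0 - a ^ 2 / L + a ^ 2 / L / 2 := by rw [hTa]
  have h3 : a ^ 2 / (2 * L) ≤ f 0 := by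
    have : a ^ 2 / L / 2 = a ^ 2 / (2 * L) := by ring
    linarith [hfT, ‹f T ≤ f 0 - a ^ 2 / L + a ^ 2 / L / 2›,
      show a ^ 2 / L = 2 * (a ^ 2 / (2 * L)) by field_simp]
  calc a ^ 2 = 2 * L * (a ^ 2 / (2 * L)) := by field_simp
  _ ≤ 2 * L * f 0 := by
      have : (0:ℝ) < 2 * L := by linarith
      exact mul_le_mul_of_nonneg_left h3 this.le
set_option linter.unusedSectionVars false
variable {E : Type*} [NormedAddCommGroup E] [InnerProductSpace ℝ E] [CompleteSpace E]

lemma sb_line_hasderiv1 (F : E → ℝ) (hF : ContDiff ℝ 2 F) (w v : E) (t : ℝ) :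
    HasDerivAt (fun t : ℝ => F (w + t • v)) (fderiv ℝ F (w + t • v) v) t := by
  have hc : HasDerivAt (fun t : ℝ => w + t • v) v t := by
    simpa using ((hasDerivAt_id t).smul_const v).const_add w
  have hFd : HasFDerivAt F (fderiv ℝ F (w + t • v)) (w + t • v) :=
    ((hF.differentiable (by norm_num)) (w + t • v)).hasFDerivAt
  exact hFd.comp_hasDerivAt t hc

lemma sb_line_hasderiv2 (F : E → ℝ) (hF : ContDiff ℝ 2 F) (w v : E) (t : ℝ) :
    HasDerivAt (fun t : ℝ => fderiv ℝ F (w + t • v) v)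
      (fderiv ℝ (fderiv ℝ F) (w + t • v) v v) t := by
  have hc : HasDerivAt (fun t : ℝ => w + t • v) v t := by
    simpa using ((hasDerivAt_id t).smul_const v).const_add w
  have hG : ContDiff ℝ 1 (fderiv ℝ F) := hF.fderiv_right (by norm_num)
  have hGd : HasFDerivAt (fderiv ℝ F) (fderiv ℝ (fderiv ℝ F) (w + t • v)) (w + t • v) :=
    ((hG.differentiable (by norm_num)) (w + t • v)).hasFDerivAt
  have h1 : HasDerivAt (fun t : ℝ => fderiv ℝ F (w + t • v))
      (fderiv ℝ (fderiv ℝ F) (w + t • v) v) t := hGd.comp_hasDerivAt t hc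
  simpa using h1.clm_apply (hasDerivAt_const t v)

lemma sb_fderiv_eq_inner_gradient (F : E → ℝ) (u y : E) :
    fderiv ℝ F u y = @inner ℝ _ _ (gradient F u) y := by
  rw [gradient, toDual_symm_apply]

lemma sb_norm_gradient (F : E → ℝ) (u : E) : ‖gradient F u‖ = ‖fderiv ℝ F u‖ := by
  rw [gradient]
  exact LinearIsometryEquiv.norm_map _ _
-- gradient bound lemma
section GradBound
variable {E : Type*} [NormedAddCommGroup E] [InnerProductSpace ℝ E] [CompleteSpace E]

lemma sb_grad_sq_bound (F : E → ℝ) (hF : ContDiff ℝ 2 F) (hFnn : ∀ w, 0 ≤ F w)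
    (ρ1 : ℝ → ℝ) (hρ1mono : MonotoneOn ρ1 (Set.Ici 0))
    (hρ1pos : ∀ x ∈ Set.Ici (0:ℝ), 0 < ρ1 x)
    (hbound : ∀ w, ‖fderiv ℝ (fderiv ℝ F) w‖ ≤ ρ1 (F w)) (w : E) :
    ‖gradient F w‖ ^ 2 ≤ 2 * ρ1 (F w) * F w := by
  set g := gradient F w with hg
  by_cases hg0 : g = 0
  · rw [hg0]
    simp only [norm_zero]
    nlinarith [hρ1pos (F w) (hFnn w), hFnn w]
  have hgn : 0 < ‖g‖ := norm_pos_iff.2 hg0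
  set v : E := -g with hv
  set f : ℝ → ℝ := fun t => F (w + t • v) with hf
  set f' : ℝ → ℝ := fun t => fderiv ℝ F (w + t • v) v with hf'
  set f'' : ℝ → ℝ := fun t => fderiv ℝ (fderiv ℝ F) (w + t • v) v v with hf''
  have hd1 : ∀ t, HasDerivAt f (f' t) t := fun t => sb_line_hasderiv1 F hF w v t
  have hd2 : ∀ t, HasDerivAt f' (f'' t) t := fun t => sb_line_hasderiv2 F hF w v t
  have hw0 : w + (0:ℝ) • v = w := by simp
  have hf0 : f 0 = F w := by rw [hf]; simp
  have hf'0 : f' 0 = -‖g‖ ^ 2 := by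
    rw [hf']
    simp only [hw0]
    rw [sb_fderiv_eq_inner_gradient F w v, hv, ← hg, inner_neg_right,
      real_inner_self_eq_norm_sq]
  set L : ℝ := ρ1 (F w) * ‖g‖ ^ 2 with hL
  have hLpos : 0 < L := mul_pos (hρ1pos (F w) (hFnn w)) (by positivity)
  have hkey := sb_key1d f f' f'' L hLpos hd1 hd2 (fun t => hFnn _)
    (by rw [hf'0]; nlinarith)
    (by
      intro t ht hft
      have h1 : f'' t ≤ ‖fderiv ℝ (fderiv ℝ F) (w + t • v)‖ * ‖v‖ * ‖v‖ := by
        calc f'' t ≤ |f'' t| := le_abs_self _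
        _ = ‖fderiv ℝ (fderiv ℝ F) (w + t • v) v v‖ := rfl
        _ ≤ ‖fderiv ℝ (fderiv ℝ F) (w + t • v) v‖ * ‖v‖ :=
            ContinuousLinearMap.le_opNorm _ v
        _ ≤ ‖fderiv ℝ (fderiv ℝ F) (w + t • v)‖ * ‖v‖ * ‖v‖ := by
            exact mul_le_mul_of_nonneg_right (ContinuousLinearMap.le_opNorm _ v)
              (norm_nonneg v)
      have h2 : ‖fderiv ℝ (fderiv ℝ F) (w + t • v)‖ ≤ ρ1 (F w) := by
        refine le_trans (hbound _) ?_
        exact hρ1mono (hFnn _) (hFnn w) (by rw [← hf0]; exact hft)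
      have hvn : ‖v‖ = ‖g‖ := by rw [hv, norm_neg]
      calc f'' t ≤ ‖fderiv ℝ (fderiv ℝ F) (w + t • v)‖ * ‖v‖ * ‖v‖ := h1
      _ ≤ ρ1 (F w) * ‖v‖ * ‖v‖ := by
          exact mul_le_mul_of_nonneg_right
            (mul_le_mul_of_nonneg_right h2 (norm_nonneg v)) (norm_nonneg v)
      _ = L := by rw [hvn, hL]; ring)
  rw [hf'0, hf0] at hkey
  have : (‖g‖ ^ 2) ^ 2 ≤ 2 * (ρ1 (F w) * ‖g‖ ^ 2) * F w := by
    calc (‖g‖ ^ 2) ^ 2 = (-‖g‖ ^ 2) ^ 2 := by ring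
    _ ≤ 2 * L * F w := hkey
    _ = 2 * (ρ1 (F w) * ‖g‖ ^ 2) * F w := by rw [hL]
  have hpos : 0 < ‖g‖ ^ 2 := by positivity
  nlinarith [this, hpos]

lemma sb_grad_bound (F : E → ℝ) (hF : ContDiff ℝ 2 F) (hFnn : ∀ w, 0 ≤ F w)
    (ρ1 : ℝ → ℝ) (hρ1mono : MonotoneOn ρ1 (Set.Ici 0))
    (hρ1cont : ContinuousOn ρ1 (Set.Ici 0))
    (hρ1pos : ∀ x ∈ Set.Ici (0:ℝ), 0 < ρ1 x)
    (hbound : ∀ w, ‖fderiv ℝ (fderiv ℝ F) w‖ ≤ ρ1 (F w)) (w : E) :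
    ‖gradient F w‖ ≤ sbRho0 ρ1 (F w) := by
  have h1 := sb_grad_sq_bound F hF hFnn ρ1 hρ1mono hρ1pos hbound w
  have hx : 0 ≤ F w := hFnn w
  have hθ : F w ≤ ρ1 (F w) * sbTheta ρ1 (F w) := by
    have := sb_theta_lb hρ1mono hρ1cont hρ1pos hx
    have hp := hρ1pos (F w) hx
    rw [div_le_iff₀ hp] at this
    linarith [this]
  have hθnn := sb_theta_nonneg hρ1mono hρ1cont hρ1pos hx
  have h2 : ‖gradient F w‖ ^ 2 ≤ (sbRho0 ρ1 (F w)) ^ 2 := by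
    have hsq : (sbRho0 ρ1 (F w)) ^ 2 = ρ1 (F w) ^ 2 * (2 * sbTheta ρ1 (F w)) := by
      rw [sbRho0, mul_pow, Real.sq_sqrt (by linarith)]
    rw [hsq]
    have hp := hρ1pos (F w) hx
    nlinarith
  calc ‖gradient F w‖ = Real.sqrt (‖gradient F w‖ ^ 2) :=
        (Real.sqrt_sq (norm_nonneg _)).symm
  _ ≤ Real.sqrt ((sbRho0 ρ1 (F w)) ^ 2) := Real.sqrt_le_sqrt h2
  _ = sbRho0 ρ1 (F w) := Real.sqrt_sq (sb_rho0_nonneg hρ1pos hx)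

end GradBound

set_option maxHeartbeats 1000000 in
/-- A gradient step with step size `1/L1(w0)` from any point `u0` of the `F(w0)`-sublevel
set with `‖∇F(u0)‖ > ε` decreases `F` by more than `ε²/(2 L1(w0))`. -/
theorem gd_decrease_step_of_selfbounding (d : ℕ) (hd : 1 ≤ d)
    (F : EuclideanSpace ℝ (Fin d) → ℝ)
    (hF : ContDiff ℝ 2 F) (hFnn : ∀ w, 0 ≤ F w)
    (ρ1 : ℝ → ℝ) (hρ1mono : MonotoneOn ρ1 (Set.Ici 0))
    (hρ1cont : ContinuousOn ρ1 (Set.Ici 0))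
    (hρ1pos : ∀ x ∈ Set.Ici (0 : ℝ), 0 < ρ1 x)
    (hbound : ∀ w, ‖fderiv ℝ (fderiv ℝ F) w‖ ≤ ρ1 (F w))
    (w0 : EuclideanSpace ℝ (Fin d)) (L1w0 : ℝ)
    (hL1w0 : L1w0 = max (max 1 (sbRho0 ρ1 (F w0 + 1)))
      (max (sbRho0 ρ1 (F w0) * sbRho0 ρ1 (F w0 + 1)) (ρ1 (F w0 + 1))))
    (ε : ℝ) (hε : 0 < ε)
    (u0 : EuclideanSpace ℝ (Fin d)) (hu0 : F u0 ≤ F w0)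
    (hgrad : ε < ‖gradient F u0‖) :
    F (u0 - (1 / L1w0) • gradient F u0) < F u0 - ε ^ 2 / (2 * L1w0) := by
  have hL1 : 1 ≤ L1w0 := by rw [hL1w0]; exact le_max_of_le_left (le_max_left _ _)
  have hL1pos : (0:ℝ) < L1w0 := lt_of_lt_of_le one_pos hL1
  have hprod : sbRho0 ρ1 (F w0) * sbRho0 ρ1 (F w0 + 1) ≤ L1w0 := by
    rw [hL1w0]; exact le_max_of_le_right (le_max_left _ _)
  have hρ1L : ρ1 (F w0 + 1) ≤ L1w0 := by
    rw [hL1w0]; exact le_max_of_le_right (le_max_right _ _)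
  set η : ℝ := 1 / L1w0 with hη
  have hηpos : 0 < η := by rw [hη]; positivity
  set g := gradient F u0 with hg
  have hgradF := sb_grad_bound F hF hFnn ρ1 hρ1mono hρ1cont hρ1pos hbound
  have hFu0nn : 0 ≤ F u0 := hFnn u0
  have hFw0nn : 0 ≤ F w0 := le_trans hFu0nn hu0
  have hFw01nn : 0 ≤ F w0 + 1 := by linarith
  have hgle : ‖g‖ ≤ sbRho0 ρ1 (F w0) :=
    le_trans (hgradF u0) (sb_rho0_mono hρ1mono hρ1cont hρ1pos hFu0nn hu0)
  set v : EuclideanSpace ℝ (Fin d) := (-η) • g with hv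
  set f : ℝ → ℝ := fun t => F (u0 + t • v) with hf
  set f' : ℝ → ℝ := fun t => fderiv ℝ F (u0 + t • v) v with hf'
  set f'' : ℝ → ℝ := fun t => fderiv ℝ (fderiv ℝ F) (u0 + t • v) v v with hf''
  have hd1 : ∀ t, HasDerivAt f (f' t) t := fun t => sb_line_hasderiv1 F hF u0 v t
  have hd2 : ∀ t, HasDerivAt f' (f'' t) t := fun t => sb_line_hasderiv2 F hF u0 v t
  have hfc : Continuous f := continuous_iff_continuousAt.2 fun t => (hd1 t).continuousAt
  have hvn : ‖v‖ = η * ‖g‖ := by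
    rw [hv, norm_smul, norm_neg, Real.norm_eq_abs, abs_of_pos hηpos]
  have hf0 : f 0 = F u0 := by rw [hf]; simp
  -- pointwise derivative bound on the good sublevel set
  have hf'bound : ∀ t : ℝ, f t ≤ F w0 + 1 → |f' t| ≤ 1 := by
    intro t hft
    have h1 : |f' t| ≤ ‖gradient F (u0 + t • v)‖ * ‖v‖ := by
      rw [hf']
      simp only []
      rw [sb_fderiv_eq_inner_gradient F (u0 + t • v) v]
      exact abs_real_inner_le_norm _ _
    have h2 : ‖gradient F (u0 + t • v)‖ ≤ sbRho0 ρ1 (F w0 + 1) :=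
      le_trans (hgradF _) (sb_rho0_mono hρ1mono hρ1cont hρ1pos (hFnn _) hft)
    have h3 : |f' t| ≤ sbRho0 ρ1 (F w0 + 1) * (η * ‖g‖) := by
      rw [← hvn]
      exact le_trans h1 (mul_le_mul_of_nonneg_right h2 (norm_nonneg v))
    have h4 : sbRho0 ρ1 (F w0 + 1) * (η * ‖g‖) ≤
        η * (sbRho0 ρ1 (F w0) * sbRho0 ρ1 (F w0 + 1)) := by
      have := mul_le_mul_of_nonneg_left hgle
        (mul_nonneg hηpos.le (sb_rho0_nonneg hρ1pos hFw01nn))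
      nlinarith [sb_rho0_nonneg hρ1pos hFw01nn, hηpos.le]
    have h5 : η * (sbRho0 ρ1 (F w0) * sbRho0 ρ1 (F w0 + 1)) ≤ 1 := by
      rw [hη]
      rw [div_mul_eq_mul_div, div_le_one hL1pos]
      linarith
    linarith [h3, h4, h5]
  -- invariance of the sublevel set along the segment
  have hinv : ∀ t ∈ Icc (0:ℝ) 1, f t ≤ F w0 + t := by
    apply sb_invariant f (fun s => F w0 + s) hfc (continuous_const.add continuous_id) 1
      (by rw [hf0]; simpa using hu0)
    intro c hc0 hc1 hsub
    have hfcle : f c ≤ F w0 + c := hsub c ⟨hc0, le_rfl⟩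
    have hcont := hfc.continuousAt (x := c)
    rw [Metric.continuousAt_iff] at hcont
    obtain ⟨δ, hδ, hball⟩ := hcont (F w0 + 1 - f c) (by linarith)
    refine ⟨δ / 2, by linarith, ?_⟩
    have hflt : ∀ s ∈ Icc c (min (c + δ/2) 1), f s ≤ F w0 + 1 := by
      intro s hs
      have h1 : dist s c < δ := by
        rw [Real.dist_eq, abs_lt]
        have h2 : s ≤ c + δ/2 := le_trans hs.2 (min_le_left _ _)
        constructor <;> [linarith [hs.1]; linarith]
      have := hball h1
      rw [Real.dist_eq, abs_lt] at this
      linarith [this.2]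
    have hder : ∀ s ∈ Icc c (min (c + δ/2) 1), f' s ≤ 1 := fun s hs =>
      le_trans (le_abs_self _) (hf'bound s (hflt s hs))
    intro s hs
    have := sb_mvt_le f f' c (min (c + δ/2) 1) 1 hd1 hder s hs
    have : f s ≤ f c + 1 * (s - c) := this
    linarith [hs.1]
  -- Hessian bound on the segment
  have hM : ∀ t ∈ Icc (0:ℝ) 1, f'' t ≤ L1w0 * (η * ‖g‖) ^ 2 := by
    intro t ht
    have hft : F (u0 + t • v) ≤ F w0 + 1 := by
      have := hinv t ht
      have h2 : f t = F (u0 + t • v) := rfl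
      linarith [ht.2]
    have h1 : f'' t ≤ ‖fderiv ℝ (fderiv ℝ F) (u0 + t • v)‖ * ‖v‖ * ‖v‖ := by
      calc f'' t ≤ |f'' t| := le_abs_self _
      _ = ‖fderiv ℝ (fderiv ℝ F) (u0 + t • v) v v‖ := rfl
      _ ≤ ‖fderiv ℝ (fderiv ℝ F) (u0 + t • v) v‖ * ‖v‖ := ContinuousLinearMap.le_opNorm _ v
      _ ≤ ‖fderiv ℝ (fderiv ℝ F) (u0 + t • v)‖ * ‖v‖ * ‖v‖ :=
          mul_le_mul_of_nonneg_right (ContinuousLinearMap.le_opNorm _ v) (norm_nonneg v)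
    have h2 : ‖fderiv ℝ (fderiv ℝ F) (u0 + t • v)‖ ≤ L1w0 :=
      le_trans (hbound _) (le_trans (hρ1mono (hFnn _) hFw01nn hft) hρ1L)
    calc f'' t ≤ ‖fderiv ℝ (fderiv ℝ F) (u0 + t • v)‖ * ‖v‖ * ‖v‖ := h1
    _ ≤ L1w0 * ‖v‖ * ‖v‖ := by
        exact mul_le_mul_of_nonneg_right
          (mul_le_mul_of_nonneg_right h2 (norm_nonneg v)) (norm_nonneg v)
    _ = L1w0 * (η * ‖g‖) ^ 2 := by rw [hvn]; ring
  have htay := sb_taylor f f' f'' 1 (L1w0 * (η * ‖g‖) ^ 2) zero_le_one hd1 hd2 hM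
  have hf'0 : f' 0 = -(η * ‖g‖ ^ 2) := by
    rw [hf']
    simp only []
    have h0 : u0 + (0:ℝ) • v = u0 := by simp
    rw [h0, sb_fderiv_eq_inner_gradient F u0 v, hv, ← hg, real_inner_smul_right,
      real_inner_self_eq_norm_sq]
    ring
  have hpt : u0 - η • g = u0 + (1:ℝ) • v := by
    rw [hv, one_smul, neg_smul, sub_eq_add_neg]
  rw [hpt]
  show f 1 < F u0 - ε ^ 2 / (2 * L1w0)
  rw [hf0, hf'0] at htay
  have e1 : L1w0 * (η * ‖g‖) ^ 2 = ‖g‖ ^ 2 / L1w0 := by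
    rw [hη]; field_simp
  have e2 : η * ‖g‖ ^ 2 = ‖g‖ ^ 2 / L1w0 := by rw [hη]; ring
  have h6 : f 1 ≤ F u0 - ‖g‖ ^ 2 / (2 * L1w0) := by
    rw [e1, e2] at htay
    have : ‖g‖ ^ 2 / L1w0 = 2 * (‖g‖ ^ 2 / (2 * L1w0)) := by field_simp
    linarith [htay]
  have hgε : ε ^ 2 < ‖g‖ ^ 2 := by nlinarith [hgrad, hε]
  have h7 : ε ^ 2 / (2 * L1w0) < ‖g‖ ^ 2 / (2 * L1w0) := by
    apply div_lt_div_of_pos_right hgε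
    linarith
  linarith
end

section
/- Under the second-order self-bounding assumption, fix w0 ∈ E and ε > 0, set L1′(w0) = ρ1(F(w0)+1), and define adaptive gradient-descent iterates starting from w0 by w_{t+1} = w_t − η_{w_t}·∇F(w_t), where η_w = min{1/L1′(w0), 1/(ρ0(F(w0)+1)·‖∇F(w)‖)} when ∇F(w) ≠ 0 (if ∇F(w_t) = 0 the iterate is already ε-stationary). Then there exists a natural number t with t ≤ 2·F(w0)/min{L1′(w0)/ρ0(F(w0)+1)², ε²/L1′(w0)} such that ‖∇F(w_t)‖ ≤ ε. -/
set_option maxHeartbeats 1000000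

open Set
section Aux
variable {E : Type*} [NormedAddCommGroup E] [InnerProductSpace ℝ E] [CompleteSpace E]

lemma fderiv_eq_inner_gradient (F : E → ℝ) (u y : E) :
    fderiv ℝ F u y = inner ℝ (gradient F u) y := by
  rw [gradient, InnerProductSpace.toDual_symm_apply]

lemma descent_segment (F : E → ℝ) (hF : ContDiff ℝ 2 F)
    {L a : ℝ} (hL : 0 ≤ L)
    (hB : ∀ x, F x ≤ a → ‖fderiv ℝ (fderiv ℝ F) x‖ ≤ L)
    (u v : E) (hinner : (inner ℝ (gradient F u) v : ℝ) ≤ 0)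
    (hslack : F u + L * ‖v‖ ^ 2 / 2 < a) :
    F (u + v) ≤ F u + (inner ℝ (gradient F u) v : ℝ) + L * ‖v‖ ^ 2 / 2 := by
  have hFd : Differentiable ℝ F := hF.differentiable two_ne_zero
  have hG : ContDiff ℝ 1 (fderiv ℝ F) := hF.fderiv_right (le_of_eq (by norm_num))
  set c : ℝ → E := fun s => u + s • v with hc_def
  have hc : ∀ s : ℝ, HasDerivAt c v s := fun s => by
    simpa [hc_def] using ((hasDerivAt_id s).smul_const v).const_add u
  have hc0 : c 0 = u := by simp [hc_def]
  have hc1 : c 1 = u + v := by simp [hc_def]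
  set ψ : ℝ → ℝ := fun s => fderiv ℝ F (c s) v with hψ_def
  have hφ : ∀ s : ℝ, HasDerivAt (fun r => F (c r)) (ψ s) s := fun s =>
    (hFd _).hasFDerivAt.comp_hasDerivAt s (hc s)
  have hψ : ∀ s : ℝ, HasDerivAt ψ (fderiv ℝ (fderiv ℝ F) (c s) v v) s := by
    intro s
    have h1 : HasFDerivAt (fun x => (ContinuousLinearMap.apply ℝ ℝ v) (fderiv ℝ F x))
        ((ContinuousLinearMap.apply ℝ ℝ v).comp (fderiv ℝ (fderiv ℝ F) (c s))) (c s) :=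
      (ContinuousLinearMap.apply ℝ ℝ v).hasFDerivAt.comp _
        ((hG.differentiable one_ne_zero _).hasFDerivAt)
    exact h1.comp_hasDerivAt s (hc s)
  have hψ0 : ψ 0 = inner ℝ (gradient F u) v := by
    rw [hψ_def]; simp only [hc0]; exact fderiv_eq_inner_gradient F u v
  set M : ℝ := L * ‖v‖ ^ 2 with hM_def
  have hM : 0 ≤ M := by positivity
  -- Taylor-type bound, valid as long as the level-set condition holds on [0, s]
  have keyB : ∀ s ∈ Icc (0:ℝ) 1, (∀ r ∈ Icc (0:ℝ) s, F (c r) ≤ a) →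
      F (c s) ≤ F u + s * ψ 0 + M * s ^ 2 / 2 := by
    intro s hs hsub
    have hψdiff : ∀ r ∈ Icc (0:ℝ) s, ‖ψ r - ψ 0‖ ≤ M * (r - 0) := by
      apply norm_image_sub_le_of_norm_deriv_le_segment'
        (fun r _ => (hψ r).hasDerivWithinAt)
      intro r hr
      have h1 : ‖fderiv ℝ (fderiv ℝ F) (c r) v v‖ ≤ ‖fderiv ℝ (fderiv ℝ F) (c r) v‖ * ‖v‖ :=
        (fderiv ℝ (fderiv ℝ F) (c r) v).le_opNorm v
      have h2 : ‖fderiv ℝ (fderiv ℝ F) (c r) v‖ ≤ ‖fderiv ℝ (fderiv ℝ F) (c r)‖ * ‖v‖ :=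
        (fderiv ℝ (fderiv ℝ F) (c r)).le_opNorm v
      have h3 : ‖fderiv ℝ (fderiv ℝ F) (c r)‖ ≤ L :=
        hB _ (hsub r (Ico_subset_Icc_self hr))
      have hv : (0:ℝ) ≤ ‖v‖ := norm_nonneg v
      calc ‖fderiv ℝ (fderiv ℝ F) (c r) v v‖ ≤ ‖fderiv ℝ (fderiv ℝ F) (c r)‖ * ‖v‖ * ‖v‖ := by
            nlinarith [norm_nonneg (fderiv ℝ (fderiv ℝ F) (c r) v)]
        _ ≤ M := by rw [hM_def]; nlinarith
    set h : ℝ → ℝ := fun r => F (c r) - ψ 0 * r - M / 2 * r ^ 2 with hh_def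
    have hh : ∀ r : ℝ, HasDerivAt h (ψ r - ψ 0 - M * r) r := by
      intro r
      have := ((hφ r).sub ((hasDerivAt_id r).const_mul (ψ 0))).sub
        ((hasDerivAt_pow 2 r).const_mul (M / 2))
      exact this.congr_deriv (by push_cast; ring)
    have hanti : AntitoneOn h (Icc 0 s) := by
      apply antitoneOn_of_deriv_nonpos (convex_Icc 0 s)
        (fun r _ => (hh r).continuousAt.continuousWithinAt)
        (fun r _ => ((hh r).differentiableAt).differentiableWithinAt)
      intro r hr
      rw [interior_Icc] at hr
      have hb := hψdiff r (Ioo_subset_Icc_self hr)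
      rw [(hh r).deriv]
      have : |ψ r - ψ 0| ≤ M * r := by simpa using hb
      have := abs_le.1 this
      linarith [this.2]
    have h0s : h s ≤ h 0 := hanti ⟨le_refl 0, hs.1⟩ ⟨hs.1, le_refl s⟩ hs.1
    rw [hh_def] at h0s
    simp only [hc0] at h0s
    nlinarith [h0s]
  -- Bootstrap: the whole segment stays in the sublevel set {F ≤ a}
  have hFua : F u ≤ a := by nlinarith
  have hgood : ∀ s ∈ Icc (0:ℝ) 1, (∀ r ∈ Icc (0:ℝ) s, F (c r) ≤ a) →
      F (c s) ≤ F u + M / 2 := by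
    intro s hs hsub
    have hk := keyB s hs hsub
    have hψ0le : ψ 0 ≤ 0 := by rw [hψ0]; exact hinner
    have h1 : s * ψ 0 ≤ 0 := mul_nonpos_of_nonneg_of_nonpos hs.1 hψ0le
    have h2 : M * s ^ 2 ≤ M := by nlinarith [mul_nonneg hM (mul_nonneg (sub_nonneg.2 hs.2) (by linarith [hs.1] : (0:ℝ) ≤ 1 + s))]
    linarith
  have hcont : Continuous fun s : ℝ => F (c s) :=
    hF.continuous.comp (by fun_prop)
  set S : Set ℝ := {s | s ∈ Icc (0:ℝ) 1 ∧ ∀ r ∈ Icc (0:ℝ) s, F (c r) ≤ a} with hS_def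
  have h0S : (0:ℝ) ∈ S := by
    refine ⟨⟨le_refl 0, zero_le_one⟩, ?_⟩
    intro r hr
    have : r = 0 := le_antisymm hr.2 hr.1
    rw [this, hc0]; exact hFua
  have hbdd : BddAbove S := ⟨1, fun x hx => hx.1.2⟩
  have hneS : S.Nonempty := ⟨0, h0S⟩
  set σ := sSup S with hσ_def
  have hσ0 : 0 ≤ σ := le_csSup hbdd h0S
  have hσ1 : σ ≤ 1 := csSup_le hneS fun x hx => hx.1.2
  have hlt : ∀ r, 0 ≤ r → r < σ → F (c r) ≤ a := by
    intro r hr0 hrσ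
    obtain ⟨x, hxS, hrx⟩ := exists_lt_of_lt_csSup hneS hrσ
    exact hxS.2 r ⟨hr0, hrx.le⟩
  have hclosed : IsClosed {x : ℝ | F (c x) ≤ a} := isClosed_le hcont continuous_const
  have hσa : F (c σ) ≤ a := by
    rcases eq_or_lt_of_le hσ0 with h | h
    · rw [← h, hc0]; exact hFua
    · have hsub : Ico (0:ℝ) σ ⊆ {x : ℝ | F (c x) ≤ a} := fun r hr => hlt r hr.1 hr.2
      have : closure (Ico (0:ℝ) σ) ⊆ {x : ℝ | F (c x) ≤ a} :=
        hclosed.closure_subset_iff.2 hsub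
      have hmem : σ ∈ closure (Ico (0:ℝ) σ) := by
        rw [closure_Ico (ne_of_lt h)]
        exact ⟨hσ0, le_refl σ⟩
      exact this hmem
  have hσS : σ ∈ S := by
    refine ⟨⟨hσ0, hσ1⟩, ?_⟩
    intro r hr
    rcases eq_or_lt_of_le hr.2 with h | h
    · rw [h]; exact hσa
    · exact hlt r hr.1 h
  have hσeq : σ = 1 := by
    by_contra hne
    have hσlt : σ < 1 := lt_of_le_of_ne hσ1 hne
    have hstrict : F (c σ) < a := lt_of_le_of_lt (hgood σ ⟨hσ0, hσ1⟩ hσS.2) hslack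
    have hopen : IsOpen {x : ℝ | F (c x) < a} := isOpen_lt hcont continuous_const
    obtain ⟨δ, hδ, hball⟩ := Metric.isOpen_iff.1 hopen σ hstrict
    set s' := min 1 (σ + δ / 2) with hs'_def
    have hσs' : σ < s' := lt_min hσlt (by linarith)
    have hs'S : s' ∈ S := by
      refine ⟨⟨le_trans hσ0 hσs'.le, min_le_left _ _⟩, ?_⟩
      intro r hr
      rcases le_or_gt r σ with h | h
      · exact hσS.2 r ⟨hr.1, h⟩
      · have hrs' : r ≤ s' := hr.2
        have : r < σ + δ := by
          have : s' ≤ σ + δ / 2 := min_le_right _ _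
          linarith
        have hrb : r ∈ Metric.ball σ δ := by
          rw [Metric.mem_ball, Real.dist_eq, abs_of_pos (by linarith : 0 < r - σ)]
          linarith
        exact (hball hrb).le
    exact absurd (le_csSup hbdd hs'S) (not_le.2 hσs')
  have h1S : ∀ r ∈ Icc (0:ℝ) 1, F (c r) ≤ a := by
    rw [hσeq] at hσS; exact hσS.2
  have hfin := keyB 1 ⟨zero_le_one, le_refl 1⟩ h1S
  rw [hc1, hψ0] at hfin
  simp only [one_mul, one_pow] at hfin
  linarith
end Aux


lemma sbTheta_lower (ρ1 : ℝ → ℝ) (hmono : MonotoneOn ρ1 (Set.Ici 0))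
    (hcont : ContinuousOn ρ1 (Set.Ici 0)) (hpos : ∀ x ∈ Set.Ici (0:ℝ), 0 < ρ1 x)
    {x : ℝ} (hx : 0 ≤ x) : x / ρ1 x ≤ sbTheta ρ1 x := by
  have hIcc : Icc (0:ℝ) x ⊆ Ici 0 := fun v hv => hv.1
  have hxI : x ∈ Ici (0:ℝ) := hx
  have hcont' : ContinuousOn (fun v => 1 / ρ1 v) (Icc 0 x) :=
    continuousOn_const.div (hcont.mono hIcc) (fun v hv => (hpos v (hIcc hv)).ne')
  have hint : IntervalIntegrable (fun v => 1 / ρ1 v) MeasureTheory.volume 0 x := by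
    apply ContinuousOn.intervalIntegrable
    rwa [uIcc_of_le hx]
  have hconst : IntervalIntegrable (fun _ : ℝ => 1 / ρ1 x) MeasureTheory.volume 0 x :=
    intervalIntegrable_const
  have hmono' : ∀ v ∈ Icc (0:ℝ) x, 1 / ρ1 x ≤ 1 / ρ1 v := fun v hv =>
    one_div_le_one_div_of_le (hpos v (hIcc hv)) (hmono (hIcc hv) hxI hv.2)
  have hle := intervalIntegral.integral_mono_on hx hconst hint hmono'
  rw [intervalIntegral.integral_const, sub_zero, smul_eq_mul] at hle
  rw [sbTheta]
  calc x / ρ1 x = x * (1 / ρ1 x) := by ring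
    _ ≤ _ := hle

/-- Adaptive gradient descent with step sizes
`η_w = min {1/L1′(w0), 1/(ρ0(F(w0)+1)·‖∇F(w)‖)}` started at `w0` finds an
`ε`-stationary point within `2 F(w0) / min {L1′(w0)/ρ0(F(w0)+1)², ε²/L1′(w0)}`
iterations, under the second-order self-bounding assumption. -/
theorem adaptive_gd_finds_fosp_of_selfbounding (d : ℕ) (hd : 1 ≤ d)
    (F : EuclideanSpace ℝ (Fin d) → ℝ)
    (hF : ContDiff ℝ 2 F) (hFnn : ∀ w, 0 ≤ F w)
    (ρ1 : ℝ → ℝ) (hρ1mono : MonotoneOn ρ1 (Set.Ici 0))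
    (hρ1cont : ContinuousOn ρ1 (Set.Ici 0))
    (hρ1pos : ∀ x ∈ Set.Ici (0 : ℝ), 0 < ρ1 x)
    (hbound : ∀ w, ‖fderiv ℝ (fderiv ℝ F) w‖ ≤ ρ1 (F w))
    (w0 : EuclideanSpace ℝ (Fin d)) (ε : ℝ) (hε : 0 < ε)
    (L1'w0 : ℝ) (hL1'w0 : L1'w0 = ρ1 (F w0 + 1))
    (w : ℕ → EuclideanSpace ℝ (Fin d)) (hw0 : w 0 = w0)
    (hrec : ∀ t, w (t + 1) = w t -
      (min (1 / L1'w0) (1 / (sbRho0 ρ1 (F w0 + 1) * ‖gradient F (w t)‖)))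
        • gradient F (w t)) :
    ∃ t : ℕ,
      (t : ℝ) ≤ 2 * F w0 / min (L1'w0 / sbRho0 ρ1 (F w0 + 1) ^ 2) (ε ^ 2 / L1'w0) ∧
      ‖gradient F (w t)‖ ≤ ε := by
  subst hL1'w0
  have hFw0 : 0 ≤ F w0 := hFnn w0
  set a : ℝ := F w0 + 1 with ha_def
  set L : ℝ := ρ1 a with hL_def
  set R : ℝ := sbRho0 ρ1 a with hR_def
  have ha1 : (1:ℝ) ≤ a := by rw [ha_def]; linarith
  have haI : a ∈ Ici (0:ℝ) := le_trans zero_le_one ha1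
  have hL : 0 < L := hρ1pos a haI
  have hθ : a / L ≤ sbTheta ρ1 a := sbTheta_lower ρ1 hρ1mono hρ1cont hρ1pos (le_trans zero_le_one ha1)
  have hθpos : 0 < sbTheta ρ1 a := lt_of_lt_of_le (div_pos (by linarith) hL) hθ
  have hR : 0 < R := by
    rw [hR_def, sbRho0]
    have : (0:ℝ) < Real.sqrt (2 * sbTheta ρ1 a) := Real.sqrt_pos.2 (by linarith)
    exact mul_pos hL this
  have hR2 : R ^ 2 = L ^ 2 * (2 * sbTheta ρ1 a) := by
    rw [hR_def, sbRho0, mul_pow, Real.sq_sqrt (by linarith)]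
  have h2La : 2 * L * a ≤ R ^ 2 := by
    have haL : a ≤ L * sbTheta ρ1 a := by
      rw [div_le_iff₀ hL] at hθ
      linarith [hθ]
    rw [hR2]
    nlinarith [mul_nonneg hL.le (sub_nonneg.2 haL)]
  have hquarter : L * (1 / R) ^ 2 / 2 ≤ 1 / 4 := by
    have h2L : 2 * L ≤ R ^ 2 := by nlinarith [h2La, hL]
    have heq : L * (1 / R) ^ 2 / 2 = L / (2 * R ^ 2) := by
      rw [div_pow, one_pow, mul_one_div, div_div, mul_comm (R ^ 2) 2]
    rw [heq, div_le_div_iff₀ (by positivity) (by norm_num)]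
    nlinarith
  have hB : ∀ x, F x ≤ a → ‖fderiv ℝ (fderiv ℝ F) x‖ ≤ L := fun x hx =>
    le_trans (hbound x) (hρ1mono (hFnn x) haI hx)
  set g : ℕ → EuclideanSpace ℝ (Fin d) := fun t => gradient F (w t) with hg_def
  set η : ℕ → ℝ := fun t => min (1 / L) (1 / (R * ‖g t‖)) with hη_def
  have hrec' : ∀ t, w (t + 1) = w t - η t • g t := by
    intro t
    simp only [hη_def, hg_def]
    exact hrec t
  have hη0 : ∀ t, 0 ≤ η t := fun t =>
    le_min (by positivity) (one_div_nonneg.2 (by positivity))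
  have hηL : ∀ t, η t ≤ 1 / L := fun t => min_le_left _ _
  have hstep : ∀ t, F (w t) ≤ F w0 →
      F (w (t + 1)) ≤ F (w t) - η t / 2 * ‖g t‖ ^ 2 := by
    intro t hle
    rcases eq_or_ne (g t) 0 with h0 | h0
    · rw [hrec' t, h0]
      simp
    · have hgpos : 0 < ‖g t‖ := norm_pos_iff.2 h0
      have hηR : η t * ‖g t‖ ≤ 1 / R := by
        calc η t * ‖g t‖ ≤ (1 / (R * ‖g t‖)) * ‖g t‖ :=
              mul_le_mul_of_nonneg_right (min_le_right _ _) hgpos.le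
          _ = 1 / R := by
            rw [one_div (R * ‖g t‖), mul_inv, mul_assoc, inv_mul_cancel₀ hgpos.ne', mul_one, one_div]
      have hv2 : ‖-(η t • g t)‖ = η t * ‖g t‖ := by
        rw [norm_neg, norm_smul, Real.norm_eq_abs, abs_of_nonneg (hη0 t)]
      have hinner : (inner ℝ (gradient F (w t)) (-(η t • g t)) : ℝ) = -(η t * ‖g t‖ ^ 2) := by
        rw [inner_neg_right, real_inner_smul_right, real_inner_self_eq_norm_sq]
      have hvsq : L * ‖-(η t • g t)‖ ^ 2 / 2 ≤ 1 / 4 := by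
        rw [hv2]
        have h1 : η t * ‖g t‖ ≥ 0 := mul_nonneg (hη0 t) hgpos.le
        have h2 : (η t * ‖g t‖) ^ 2 ≤ (1 / R) ^ 2 := by nlinarith
        nlinarith
      have hslack : F (w t) + L * ‖-(η t • g t)‖ ^ 2 / 2 < a := by
        rw [ha_def]; linarith
      have hds := descent_segment F hF hL.le hB (w t) (-(η t • g t))
        (by rw [hinner]; exact neg_nonpos.2 (by positivity)) hslack
      rw [hinner, hv2] at hds
      have hwt : w t + -(η t • g t) = w (t + 1) := by rw [hrec' t, sub_eq_add_neg]
      rw [hwt] at hds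
      have hLη : L * η t ≤ 1 := by
        have := hηL t
        rw [le_div_iff₀ hL] at this
        linarith
      have hfin : L * (η t * ‖g t‖) ^ 2 / 2 ≤ η t / 2 * ‖g t‖ ^ 2 := by
        have h1 : L * (η t * ‖g t‖) ^ 2 = (L * η t) * (η t * ‖g t‖ ^ 2) := by ring
        have h2 : (L * η t) * (η t * ‖g t‖ ^ 2) ≤ 1 * (η t * ‖g t‖ ^ 2) :=
          mul_le_mul_of_nonneg_right hLη (by positivity)
        nlinarith
      linarith
  have hsub : ∀ t, F (w t) ≤ F w0 := by
    intro t
    induction t with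
    | zero => rw [hw0]
    | succ t ih =>
      have h1 := hstep t ih
      have h2 : 0 ≤ η t / 2 * ‖g t‖ ^ 2 := by positivity
      linarith
  set m : ℝ := min (L / R ^ 2) (ε ^ 2 / L) with hm_def
  have hm : 0 < m := lt_min (by positivity) (by positivity)
  have hkey : ∀ t, ε < ‖g t‖ → m ≤ η t * ‖g t‖ ^ 2 := by
    intro t hgt
    have hgpos : 0 < ‖g t‖ := lt_trans hε hgt
    have h1 : m ≤ (1 / L) * ‖g t‖ ^ 2 := by
      have : m ≤ ε ^ 2 / L := min_le_right _ _
      have hsq : ε ^ 2 ≤ ‖g t‖ ^ 2 := by nlinarith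
      calc m ≤ ε ^ 2 / L := min_le_right _ _
        _ ≤ ‖g t‖ ^ 2 / L := by gcongr
        _ = (1 / L) * ‖g t‖ ^ 2 := by ring
    have h2 : m ≤ (1 / (R * ‖g t‖)) * ‖g t‖ ^ 2 := by
      have heq : (1 / (R * ‖g t‖)) * ‖g t‖ ^ 2 = ‖g t‖ / R := by
        field_simp
      rw [heq]
      rcases le_total ε (L / R) with h | h
      · have hεR : ε * R ≤ L := by rwa [← le_div_iff₀ hR]
        calc m ≤ ε ^ 2 / L := min_le_right _ _
          _ ≤ ‖g t‖ / R := by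
            rw [div_le_div_iff₀ hL hR]
            nlinarith
      · have hLR : L ≤ ε * R := by rwa [← div_le_iff₀ hR]
        calc m ≤ L / R ^ 2 := min_le_left _ _
          _ ≤ ‖g t‖ / R := by
            rw [div_le_div_iff₀ (by positivity) hR]
            nlinarith
    rcases min_cases (1 / L) (1 / (R * ‖g t‖)) with ⟨he, _⟩ | ⟨he, _⟩
    · have : η t = 1 / L := he
      rw [this]; exact h1
    · have : η t = 1 / (R * ‖g t‖) := he
      rw [this]; exact h2
  have hlow : ∀ t : ℕ, (∀ s, s < t → ε < ‖g s‖) → F (w t) ≤ F w0 - t * (m / 2) := by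
    intro t
    induction t with
    | zero => intro _; rw [hw0]; simp
    | succ t ih =>
      intro hprev
      have h1 := ih (fun s hs => hprev s (hs.trans (Nat.lt_succ_self t)))
      have h2 := hstep t (by
        have : (0:ℝ) ≤ t * (m / 2) := by positivity
        linarith)
      have h3 := hkey t (hprev t (Nat.lt_succ_self t))
      have h4 : m / 2 ≤ η t / 2 * ‖g t‖ ^ 2 := by linarith
      push_cast
      linarith
  have hterm : ∃ t : ℕ, ‖g t‖ ≤ ε := by
    by_contra hcon
    push_neg at hcon
    set N : ℕ := ⌈2 * F w0 / m⌉₊ + 1 with hN_def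
    have hN := hlow N (fun s _ => hcon s)
    have hFN := hFnn (w N)
    have hNm : (N : ℝ) * (m / 2) ≤ F w0 := by linarith
    have hNle : (N : ℝ) ≤ 2 * F w0 / m := by
      rw [le_div_iff₀ hm]
      nlinarith
    have hNle2 : (N : ℝ) ≤ (⌈2 * F w0 / m⌉₊ : ℝ) := hNle.trans (Nat.le_ceil _)
    have : N ≤ ⌈2 * F w0 / m⌉₊ := by exact_mod_cast hNle2
    omega
  set t₀ := Nat.find hterm with ht₀_def
  have hspec : ‖g t₀‖ ≤ ε := Nat.find_spec hterm
  have hmin : ∀ s, s < t₀ → ε < ‖g s‖ := fun s hs =>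
    lt_of_not_ge (Nat.find_min hterm hs)
  have hlt := hlow t₀ hmin
  have hFt := hFnn (w t₀)
  have htm : (t₀ : ℝ) * (m / 2) ≤ F w0 := by linarith
  refine ⟨t₀, ?_, hspec⟩
  rw [le_div_iff₀ hm]
  nlinarith
end
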